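/- For every t ≥ 1 and every n < m, there is a formula φ of 2-variable counting logic with counting rank at most t, of size at most 2⌈(n+1)/t⌉ + 4 (hence of size O(n/t)), such that A_n ⊨ φ and A_m ⊨ ¬φ. -/

import Mathlib

/-- Terms over the linear-order signature `{min, max, <, succ}`. -/
inductive LTerm : Type
  | min : LTerm
  | max : LTerm
  | var : ℕ → LTerm

/-- Formulas of counting logic over the signature `{min, max, <, succ}`:
first-order logic extended with the counting quantifiers `∃^{≥k} x_j` and `∀^{≥k} x_j`. -/
inductive CFormula : Type
  | eq : LTerm → LTerm → CFormula
  | lt : LTerm → LTerm → CFormula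
  | succ : LTerm → LTerm → CFormula
  | not : CFormula → CFormula
  | or : CFormula → CFormula → CFormula
  | and : CFormula → CFormula → CFormula
  | exCnt : ℕ → ℕ → CFormula → CFormula    -- `exCnt k j ψ` is `∃^{≥k} x_j ψ`
  | allCnt : ℕ → ℕ → CFormula → CFormula   -- `allCnt k j ψ` is `∀^{≥k} x_j ψ = ¬∃^{≥k} x_j ¬ψ`

/-- All variables occurring in a term have index `< m`. -/
def LTerm.varsLT (m : ℕ) : LTerm → Prop
  | .var j => j < m
  | _ => True

namespace CFormula

/-- Formula size. -/
def size : CFormula → ℕ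
  | eq _ _ => 1
  | lt _ _ => 1
  | succ _ _ => 1
  | not ψ => ψ.size + 1
  | or ψ θ => ψ.size + θ.size
  | and ψ θ => ψ.size + θ.size
  | exCnt _ _ ψ => ψ.size + 1
  | allCnt _ _ ψ => ψ.size + 1

/-- Counting rank: the maximum counting rank of the quantifiers of the formula. -/
def crank : CFormula → ℕ
  | eq _ _ => 0
  | lt _ _ => 0
  | succ _ _ => 0
  | not ψ => ψ.crank
  | or ψ θ => max ψ.crank θ.crank
  | and ψ θ => max ψ.crank θ.crank
  | exCnt k _ ψ => max k ψ.crank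
  | allCnt k _ ψ => max k ψ.crank

/-- Quantifier rank: maximal nesting depth of quantifiers. -/
def qrank : CFormula → ℕ
  | eq _ _ => 0
  | lt _ _ => 0
  | succ _ _ => 0
  | not ψ => ψ.qrank
  | or ψ θ => max ψ.qrank θ.qrank
  | and ψ θ => max ψ.qrank θ.qrank
  | exCnt _ _ ψ => ψ.qrank + 1
  | allCnt _ _ ψ => ψ.qrank + 1

/-- The formula uses only the variables `x_0, …, x_{m-1}`. -/
def varsLT (m : ℕ) : CFormula → Prop
  | eq t t' => t.varsLT m ∧ t'.varsLT m
  | lt t t' => t.varsLT m ∧ t'.varsLT m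
  | succ t t' => t.varsLT m ∧ t'.varsLT m
  | not ψ => ψ.varsLT m
  | or ψ θ => ψ.varsLT m ∧ θ.varsLT m
  | and ψ θ => ψ.varsLT m ∧ θ.varsLT m
  | exCnt _ j ψ => j < m ∧ ψ.varsLT m
  | allCnt _ j ψ => j < m ∧ ψ.varsLT m

/-- Atomic formulas. -/
def IsAtomic : CFormula → Prop
  | eq _ _ => True
  | lt _ _ => True
  | succ _ _ => True
  | _ => False

end CFormula

/-- A relational structure over the signature `{min, max, <, succ}`. -/
structure LOStruct : Type 1 where
  carrier : Type
  lt : carrier → carrier → Prop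
  succ : carrier → carrier → Prop
  bot : carrier
  top : carrier

/-- Value of a term in a structure under a variable assignment. -/
def LTerm.val (S : LOStruct) (α : ℕ → S.carrier) : LTerm → S.carrier
  | .min => S.bot
  | .max => S.top
  | .var j => α j

/-- Satisfaction of a counting-logic formula in a structure under an assignment.
`∃^{≥k} x_j ψ` holds iff at least `k` distinct values for `x_j` satisfy `ψ`. -/
def Sat (S : LOStruct) : (ℕ → S.carrier) → CFormula → Prop
  | α, .eq t t' => t.val S α = t'.val S α
  | α, .lt t t' => S.lt (t.val S α) (t'.val S α)
  | α, .succ t t' => S.succ (t.val S α) (t'.val S α)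
  | α, .not ψ => ¬ Sat S α ψ
  | α, .or ψ θ => Sat S α ψ ∨ Sat S α θ
  | α, .and ψ θ => Sat S α ψ ∧ Sat S α θ
  | α, .exCnt k j ψ =>
      ∃ f : Fin k → S.carrier, Function.Injective f ∧
        ∀ i, Sat S (Function.update α j (f i)) ψ
  | α, .allCnt k j ψ =>
      ¬ ∃ f : Fin k → S.carrier, Function.Injective f ∧
        ∀ i, ¬ Sat S (Function.update α j (f i)) ψ

/-- The linear order `A_n = ({0,…,n}, <)` with `min = 0`, `max = n` and the successor relation. -/
def AStruct (n : ℕ) : LOStruct where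
  carrier := Fin (n + 1)
  lt := fun a b => a < b
  succ := fun a b => (a : ℕ) + 1 = (b : ℕ)
  bot := 0
  top := Fin.last n

/-- `psi t i j` expresses, about the free variable `x_j`, that `x_j ≥ i * t`. -/
def psi (t : ℕ) : ℕ → ℕ → CFormula
  | 0, _ => .eq .min .min
  | i+1, j => .exCnt t (1-j) (.and (.lt (.var (1-j)) (.var j)) (psi t i (1-j)))

lemma psi_varsLT (t : ℕ) : ∀ i j, j < 2 → (psi t i j).varsLT 2 := by
  intro i
  induction i with
  | zero => intro j hj; simp [psi, CFormula.varsLT, LTerm.varsLT]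
  | succ i ih =>
    intro j hj
    exact ⟨by omega, ⟨show 1 - j < 2 by omega, show j < 2 from hj⟩, ih (1-j) (by omega)⟩

lemma psi_size (t : ℕ) : ∀ i j, (psi t i j).size = 2 * i + 1 := by
  intro i
  induction i with
  | zero => intro j; rfl
  | succ i ih => intro j; simp [psi, CFormula.size, ih]; omega

lemma psi_crank (t : ℕ) : ∀ i j, (psi t i j).crank ≤ t := by
  intro i
  induction i with
  | zero => intro j; simp [psi, CFormula.crank]
  | succ i ih =>
    intro j
    simp [psi, CFormula.crank]
    exact ih (1-j)

lemma ex_inj_iff (N k c b : ℕ) (hk : 1 ≤ k) (hb : b ≤ N + 1) :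
    (∃ f : Fin k → Fin (N+1), Function.Injective f ∧
      ∀ i, c ≤ (f i : ℕ) ∧ (f i : ℕ) < b) ↔ c + k ≤ b := by
  constructor
  · rintro ⟨f, hf, h⟩
    have hcard : (Finset.univ : Finset (Fin k)).card ≤ (Finset.Ico c b).card := by
      apply Finset.card_le_card_of_injOn (fun i => (f i : ℕ))
      · intro i _; exact Finset.mem_Ico.2 (h i)
      · intro i _ j _ hij
        exact hf (Fin.val_injective hij)
    simp [Nat.card_Ico] at hcard
    omega
  · intro h
    refine ⟨fun i => ⟨c + i, by omega⟩, ?_, ?_⟩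
    · intro i j hij
      have := congrArg Fin.val hij
      simp at this
      exact Fin.ext this
    · intro i
      refine ⟨by simp, ?_⟩
      simp
      omega

lemma sat_psi (N t : ℕ) : ∀ i j (α : ℕ → Fin (N+1)), j < 2 →
    (Sat (AStruct N) α (psi t i j) ↔ i * t ≤ (α j : ℕ)) := by
  intro i
  induction i with
  | zero => intro j α hj; simp [psi, Sat]
  | succ i ih =>
    intro j α hj
    have hne : (1 - j) ≠ j := by omega
    have key : ∀ v : Fin (N+1),
        Sat (AStruct N) (Function.update α (1-j) v)
          (.and (.lt (.var (1-j)) (.var j)) (psi t i (1-j)))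
        ↔ (i * t ≤ (v : ℕ) ∧ (v : ℕ) < (α j : ℕ)) := by
      intro v
      have h1 : Function.update α (1-j) v (1-j) = v := Function.update_self _ _ _
      have h2 : Function.update α (1-j) v j = α j := Function.update_of_ne (by omega) _ _
      show ((AStruct N).lt _ _ ∧ Sat _ _ _) ↔ _
      erw [ih (1-j) (Function.update α (1-j) v) (by omega)]
      simp only [LTerm.val, h1, h2, AStruct]
      constructor
      · rintro ⟨ha, hb⟩; exact ⟨hb, ha⟩
      · rintro ⟨ha, hb⟩; exact ⟨hb, ha⟩
    show (∃ f : Fin t → Fin (N+1), Function.Injective f ∧ ∀ k, Sat _ _ _) ↔ _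
    rw [Nat.succ_mul]
    by_cases hT : 1 ≤ t
    · constructor
      · rintro ⟨f, hf, h⟩
        exact (ex_inj_iff N t (i * t) (α j : ℕ) hT (α j).isLt.le).1
          ⟨f, hf, fun k => (key (f k)).1 (h k)⟩
      · intro h
        obtain ⟨f, hf, hc⟩ := (ex_inj_iff N t (i * t) (α j : ℕ) hT (α j).isLt.le).2 h
        exact ⟨f, hf, fun k => (key (f k)).2 ⟨(hc k).1, (hc k).2⟩⟩
    · have ht0 : t = 0 := by omega
      subst ht0
      simp only [Nat.mul_zero, Nat.add_zero, Nat.zero_le, iff_true]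
      exact ⟨Fin.elim0, fun a => a.elim0, fun a => a.elim0⟩

lemma sat_top (N t r s : ℕ) (hs : 1 ≤ s) (α : ℕ → Fin (N+1)) :
    Sat (AStruct N) α (.exCnt s 0 (psi t r 0)) ↔ r * t + s ≤ N + 1 := by
  have key : ∀ v : Fin (N+1),
      Sat (AStruct N) (Function.update α 0 v) (psi t r 0) ↔ r * t ≤ (v : ℕ) := by
    intro v
    erw [sat_psi N t r 0 _ (by omega)]
    erw [Function.update_self]
  show (∃ f : Fin s → Fin (N+1), Function.Injective f ∧ ∀ k, Sat _ _ _) ↔ _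
  rw [← ex_inj_iff N s (r * t) (N+1) hs (le_refl _)]
  constructor
  · rintro ⟨f, hf, h⟩
    exact ⟨f, hf, fun k => ⟨(key (f k)).1 (h k), (f k).isLt⟩⟩
  · rintro ⟨f, hf, h⟩
    exact ⟨f, hf, fun k => (key (f k)).2 (h k).1⟩

/-- For every `t ≥ 1` and every `n < m`, there is a formula `φ` of 2-variable
counting logic with counting rank at most `t`, of size at most `2⌈(n+1)/t⌉ + 4`
(note `⌈(n+1)/t⌉ = (n + t) / t` in natural-number arithmetic), such that `A_n ⊨ φ` and
`A_m ⊨ ¬φ`. -/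
theorem counting2_size_upper_bound (t n m : ℕ) (ht : 1 ≤ t) (hnm : n < m) :
    ∃ φ : CFormula, φ.varsLT 2 ∧ φ.crank ≤ t ∧ φ.size ≤ 2 * ((n + t) / t) + 4 ∧
      Sat (AStruct n) (fun _ => (AStruct n).bot) φ ∧
      ¬ Sat (AStruct m) (fun _ => (AStruct m).bot) φ := by
  set r := (n + 1) / t with hr
  set s := n + 2 - r * t with hs
  have hrt : r * t ≤ n + 1 := Nat.div_mul_le_self _ _
  have hdm : t * r + (n + 1) % t = n + 1 := by rw [hr]; exact Nat.div_add_mod _ _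
  have hmlt : (n + 1) % t < t := Nat.mod_lt _ (by omega)
  have hcm : t * r = r * t := Nat.mul_comm t r
  have hrt2 : n + 1 < r * t + t := by omega
  have hs1 : 1 ≤ s := by omega
  have hst : s ≤ t := by omega
  have hsum : r * t + s = n + 2 := by omega
  refine ⟨.not (.exCnt s 0 (psi t r 0)), ?_, ?_, ?_, ?_, ?_⟩
  · exact ⟨by omega, psi_varsLT t r 0 (by omega)⟩
  · show max s (psi t r 0).crank ≤ t
    exact max_le hst (psi_crank t r 0)
  · show (psi t r 0).size + 1 + 1 ≤ _
    rw [psi_size]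
    have : r ≤ (n + t) / t := Nat.div_le_div_right (by omega)
    omega
  · show ¬ Sat _ _ _
    erw [sat_top n t r s hs1]
    omega
  · show ¬ ¬ Sat _ _ _
    erw [sat_top m t r s hs1]
    omega
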